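/- arXiv:2207.04950 — 3 statements merged into one kernel-verified Lean document; each statement's English description precedes it below -/
import Mathlib

section
/- Let $\alpha > 1$, $\beta > 0$, and let $(a_i)_{i\ge 1}, (d_j)_{j\ge 1}$ be positive sequences with $a_i \le C_1 i^{-\alpha}$, $d_j \le C_2 j^{-\beta}$, and $(d_j)$ monotonically decreasing. Suppose there is $C < \infty$ such that a doubly-indexed real array $(c_{i,j})_{i,j\in\mathbb{N}}$ satisfies $\sum_{j\in\mathbb{N}} c_{i,j}^2 d_j^{-2} \le C^2 a_i^2$ for every $i$. Then for every $\delta > 0$ there exists a constant $K$ such that for every $N\in\mathbb{N}$ there exists a monotonically decreasing sequence $(m_i)_{i\in\mathbb{N}} \subseteq \mathbb{N}_0$ with $\sum_{i\in\mathbb{N}} m_i \le N$ and $\sum_{i\in\mathbb{N}} \big(\sum_{j > m_i} c_{i,j}^2\big)^{1/2} \le K\, N^{-\min\{\alpha-1,\beta\}+\delta}$. -/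
open Real

private lemma sum_shift_rpow {r : ℝ} (hr : 1 < r) :
    Summable (fun i : ℕ => ((i : ℝ) + 1) ^ (-r)) := by
  have h0 : Summable (fun n : ℕ => (n : ℝ) ^ (-r)) :=
    Real.summable_nat_rpow.2 (by linarith)
  have h1 := (summable_nat_add_iff (f := fun n : ℕ => (n : ℝ) ^ (-r)) 1).2 h0
  refine h1.congr fun n => ?_
  push_cast
  ring_nf

/-- Lemma 4.4 (i): sequences are indexed starting from `1`, realized here
by `0`-based functions where index `i : ℕ` stands for `i + 1`; in particular the tail
`∑_{j > m_i}` (1-based) is the sum over `{j : ℕ // m i ≤ j}` (0-based). -/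
theorem stmt6 (α β C1 C2 C : ℝ) (hα : 1 < α) (hβ : 0 < β)
    (hC1 : 0 < C1) (hC2 : 0 < C2) (hC : 0 < C)
    (a d : ℕ → ℝ) (hapos : ∀ i, 0 < a i) (hdpos : ∀ j, 0 < d j)
    (ha : ∀ i : ℕ, a i ≤ C1 * ((i : ℝ) + 1) ^ (-α))
    (hd : ∀ j : ℕ, d j ≤ C2 * ((j : ℝ) + 1) ^ (-β))
    (hdmono : ∀ j, d (j + 1) ≤ d j)
    (c : ℕ → ℕ → ℝ)
    (hcsum : ∀ i, Summable fun j => (c i j) ^ 2 / (d j) ^ 2)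
    (hcb : ∀ i, ∑' j, (c i j) ^ 2 / (d j) ^ 2 ≤ C ^ 2 * (a i) ^ 2)
    (δ : ℝ) (hδ : 0 < δ) :
    ∃ K > (0 : ℝ), ∀ N : ℕ, 1 ≤ N → ∃ m : ℕ → ℕ,
      (∀ i, m (i + 1) ≤ m i) ∧
      (∀ F : Finset ℕ, ∑ i ∈ F, m i ≤ N) ∧
      (Summable fun i => Real.sqrt (∑' j : {j : ℕ // m i ≤ j}, (c i (j : ℕ)) ^ 2)) ∧
      ∑' i, Real.sqrt (∑' j : {j : ℕ // m i ≤ j}, (c i (j : ℕ)) ^ 2) ≤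
        K * (N : ℝ) ^ (-(min (α - 1) β) + δ) := by
  -- basic constants
  set γ : ℝ := min (α - 1) β with hγdef
  have hγpos : 0 < γ := lt_min (by linarith) hβ
  set δ' : ℝ := min δ γ / 2 with hδ'def
  have hδ'pos : 0 < δ' := by
    have : 0 < min δ γ := lt_min hδ hγpos
    linarith
  have hδ'δ : δ' ≤ δ := by
    have := min_le_left δ γ; simp only [hδ'def]; linarith
  have hδ'γ : δ' < γ := by
    have := min_le_right δ γ; simp only [hδ'def]; linarith
  set s : ℝ := γ - δ' with hsdef
  have hs0 : 0 < s := by simp only [hsdef]; linarith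
  have hsγ : s < γ := by simp only [hsdef]; linarith
  have hsα : s < α - 1 := lt_of_lt_of_le hsγ (min_le_left _ _)
  have hsβ : s ≤ β := le_of_lt (lt_of_lt_of_le hsγ (min_le_right _ _))
  set t : ℝ := s / β with htdef
  have ht0 : 0 < t := div_pos hs0 hβ
  have ht1 : t ≤ 1 := by
    rw [htdef, div_le_one hβ]; exact hsβ
  have htβ : t * β = s := by rw [htdef]; field_simp
  set p : ℝ := (1 + (α - 1) / s) / 2 with hpdef
  have hratio : 1 < (α - 1) / s := (one_lt_div hs0).2 hsα
  have hp1 : 1 < p := by simp only [hpdef]; linarith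
  have hp0 : 0 < p := by linarith
  have hps : p * s < α - 1 := by
    have hp2 : p < (α - 1) / s := by simp only [hpdef]; linarith
    calc p * s < ((α - 1) / s) * s := by exact mul_lt_mul_of_pos_right hp2 hs0
    _ = α - 1 := by field_simp
  set q : ℝ := α - p * s with hqdef
  have hq1 : 1 < q := by simp only [hqdef]; linarith
  -- summable auxiliary series
  have hZsum : Summable (fun i : ℕ => ((i : ℝ) + 1) ^ (-p)) := sum_shift_rpow hp1
  have hZterm : ∀ i : ℕ, 0 < ((i : ℝ) + 1) ^ (-p) := fun i =>
    Real.rpow_pos_of_pos (by positivity) _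
  set Z : ℝ := ∑' i : ℕ, ((i : ℝ) + 1) ^ (-p) with hZdef
  have hZpos : 0 < Z := Summable.tsum_pos hZsum (fun i => (hZterm i).le) 0 (hZterm 0)
  have hQsum : Summable (fun i : ℕ => ((i : ℝ) + 1) ^ (-q)) := sum_shift_rpow hq1
  set Zq : ℝ := ∑' i : ℕ, ((i : ℝ) + 1) ^ (-q) with hZqdef
  have hZqpos : 0 < Zq := Summable.tsum_pos hQsum
    (fun i => (Real.rpow_pos_of_pos (by positivity) _).le) 0
    (Real.rpow_pos_of_pos (by positivity) _)
  -- d is antitone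
  have hdanti : ∀ {j k : ℕ}, j ≤ k → d k ≤ d j := fun {j k} h =>
    antitone_nat_of_succ_le hdmono h
  -- the constant K
  refine ⟨C * C1 * C2 * Zq * Z ^ s, by positivity, ?_⟩
  intro N hN
  have hN1 : (1 : ℝ) ≤ (N : ℝ) := by exact_mod_cast hN
  have hNpos : (0 : ℝ) < N := by linarith
  set M : ℝ := (N : ℝ) / Z with hMdef
  have hMpos : 0 < M := div_pos hNpos hZpos
  set m : ℕ → ℕ := fun i => ⌊M * ((i : ℝ) + 1) ^ (-p)⌋₊ with hmdef
  have hxpos : ∀ i : ℕ, 0 < M * ((i : ℝ) + 1) ^ (-p) := fun i =>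
    mul_pos hMpos (hZterm i)
  -- monotonicity of m
  have hmmono : ∀ i, m (i + 1) ≤ m i := by
    intro i
    apply Nat.floor_le_floor
    apply mul_le_mul_of_nonneg_left _ hMpos.le
    apply Real.rpow_le_rpow_of_nonpos (by positivity) (by push_cast; linarith)
      (by linarith)
  -- partial sums bound
  have hmsum : ∀ F : Finset ℕ, ∑ i ∈ F, m i ≤ N := by
    intro F
    have h1 : ((∑ i ∈ F, m i : ℕ) : ℝ) ≤ ∑ i ∈ F, M * ((i : ℝ) + 1) ^ (-p) := by
      push_cast
      apply Finset.sum_le_sum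
      intro i _
      exact Nat.floor_le (hxpos i).le
    have h2 : ∑ i ∈ F, M * ((i : ℝ) + 1) ^ (-p) ≤ M * Z := by
      rw [hZdef, ← tsum_mul_left]
      exact Summable.sum_le_tsum F (fun i _ => (hxpos i).le) (hZsum.mul_left M)
    have h3 : M * Z = N := by rw [hMdef]; field_simp
    exact_mod_cast h1.trans (h2.trans_eq h3)
  -- per-index tail bound
  have hkey : ∀ i : ℕ,
      Real.sqrt (∑' j : {j : ℕ // m i ≤ j}, (c i (j : ℕ)) ^ 2) ≤
        (C * C1 * C2 * M ^ (-s)) * ((i : ℝ) + 1) ^ (-q) := by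
    intro i
    -- tail sum ≤ d(m i)^2 * (C * a i)^2
    have hsub : Summable (fun j : {j : ℕ // m i ≤ j} =>
        (c i (j : ℕ)) ^ 2 / (d (j : ℕ)) ^ 2) := (hcsum i).subtype _
    have hmaj : Summable (fun j : {j : ℕ // m i ≤ j} =>
        (c i (j : ℕ)) ^ 2 / (d (j : ℕ)) ^ 2 * (d (m i)) ^ 2) := hsub.mul_right _
    have hle : ∀ j : {j : ℕ // m i ≤ j}, (c i (j : ℕ)) ^ 2 ≤
        (c i (j : ℕ)) ^ 2 / (d (j : ℕ)) ^ 2 * (d (m i)) ^ 2 := by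
      intro j
      have hdj : d (j : ℕ) ≤ d (m i) := hdanti j.2
      have hdjpos := hdpos (j : ℕ)
      rw [div_mul_eq_mul_div, le_div_iff₀ (by positivity)]
      apply mul_le_mul_of_nonneg_left _ (by positivity)
      exact pow_le_pow_left₀ hdjpos.le hdj 2
    have hsumc : Summable (fun j : {j : ℕ // m i ≤ j} => (c i (j : ℕ)) ^ 2) :=
      Summable.of_nonneg_of_le (fun j => by positivity) hle hmaj
    have htail : (∑' j : {j : ℕ // m i ≤ j}, (c i (j : ℕ)) ^ 2) ≤
        (d (m i)) ^ 2 * (C ^ 2 * (a i) ^ 2) := by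
      calc (∑' j : {j : ℕ // m i ≤ j}, (c i (j : ℕ)) ^ 2)
          ≤ ∑' j : {j : ℕ // m i ≤ j},
              (c i (j : ℕ)) ^ 2 / (d (j : ℕ)) ^ 2 * (d (m i)) ^ 2 :=
            Summable.tsum_le_tsum hle hsumc hmaj
        _ = (∑' j : {j : ℕ // m i ≤ j}, (c i (j : ℕ)) ^ 2 / (d (j : ℕ)) ^ 2)
              * (d (m i)) ^ 2 := tsum_mul_right
        _ ≤ (∑' j : ℕ, (c i j) ^ 2 / (d j) ^ 2) * (d (m i)) ^ 2 := by
            apply mul_le_mul_of_nonneg_right _ (by positivity)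
            exact Summable.tsum_subtype_le (fun j : ℕ => (c i j) ^ 2 / (d j) ^ 2)
              {j : ℕ | m i ≤ j} (fun j => by positivity) (hcsum i)
        _ ≤ (C ^ 2 * (a i) ^ 2) * (d (m i)) ^ 2 := by
            apply mul_le_mul_of_nonneg_right (hcb i) (by positivity)
        _ = (d (m i)) ^ 2 * (C ^ 2 * (a i) ^ 2) := by ring
    have hsqrt : Real.sqrt (∑' j : {j : ℕ // m i ≤ j}, (c i (j : ℕ)) ^ 2) ≤
        C * a i * d (m i) := by
      have h2 : (d (m i)) ^ 2 * (C ^ 2 * (a i) ^ 2) = (C * a i * d (m i)) ^ 2 := by ring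
      calc Real.sqrt (∑' j : {j : ℕ // m i ≤ j}, (c i (j : ℕ)) ^ 2)
          ≤ Real.sqrt ((C * a i * d (m i)) ^ 2) := Real.sqrt_le_sqrt (h2 ▸ htail)
        _ = C * a i * d (m i) := Real.sqrt_sq
            (le_of_lt (mul_pos (mul_pos hC (hapos i)) (hdpos _)))
    -- bound d (m i)
    have hfloor : M * ((i : ℝ) + 1) ^ (-p) ≤ (m i : ℝ) + 1 :=
      (Nat.lt_floor_add_one _).le
    have hone : (1 : ℝ) ≤ (m i : ℝ) + 1 := by
      have : (0 : ℝ) ≤ (m i : ℝ) := Nat.cast_nonneg _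
      linarith
    have hxt : (M * ((i : ℝ) + 1) ^ (-p)) ^ t ≤ (m i : ℝ) + 1 := by
      rcases le_total (M * ((i : ℝ) + 1) ^ (-p)) 1 with hx1 | hx1
      · exact le_trans (Real.rpow_le_one (hxpos i).le hx1 ht0.le) hone
      · calc (M * ((i : ℝ) + 1) ^ (-p)) ^ t ≤ (M * ((i : ℝ) + 1) ^ (-p)) ^ (1 : ℝ) :=
            Real.rpow_le_rpow_of_exponent_le hx1 ht1
          _ = M * ((i : ℝ) + 1) ^ (-p) := Real.rpow_one _
          _ ≤ (m i : ℝ) + 1 := hfloor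
    have hdm : d (m i) ≤ C2 * (M * ((i : ℝ) + 1) ^ (-p)) ^ (-s) := by
      calc d (m i) ≤ C2 * ((m i : ℝ) + 1) ^ (-β) := hd (m i)
        _ ≤ C2 * ((M * ((i : ℝ) + 1) ^ (-p)) ^ t) ^ (-β) := by
            apply mul_le_mul_of_nonneg_left _ hC2.le
            exact Real.rpow_le_rpow_of_nonpos
              (Real.rpow_pos_of_pos (hxpos i) t) hxt (by linarith)
        _ = C2 * (M * ((i : ℝ) + 1) ^ (-p)) ^ (-s) := by
            rw [← Real.rpow_mul (hxpos i).le]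
            congr 1
            rw [mul_comm t (-β), neg_mul, mul_comm β t, htβ]
    -- expand x ^ (-s)
    have hxs : (M * ((i : ℝ) + 1) ^ (-p)) ^ (-s) =
        M ^ (-s) * ((i : ℝ) + 1) ^ (p * s) := by
      rw [Real.mul_rpow hMpos.le (hZterm i).le, ← Real.rpow_mul (by positivity)]
      ring_nf
    have hfin : C * a i * d (m i) ≤
        (C * C1 * C2 * M ^ (-s)) * ((i : ℝ) + 1) ^ (-q) := by
      have h1 : C * a i * d (m i) ≤
          C * (C1 * ((i : ℝ) + 1) ^ (-α)) * (C2 * (M * ((i : ℝ) + 1) ^ (-p)) ^ (-s)) := by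
        refine mul_le_mul ?_ hdm (hdpos _).le (by positivity)
        exact mul_le_mul_of_nonneg_left (ha i) hC.le
      refine h1.trans_eq ?_
      rw [hxs]
      have hexp : ((i : ℝ) + 1) ^ (-α) * ((i : ℝ) + 1) ^ (p * s) =
          ((i : ℝ) + 1) ^ (-q) := by
        rw [← Real.rpow_add (by positivity)]
        congr 1
        rw [hqdef]; ring
      calc C * (C1 * ((i : ℝ) + 1) ^ (-α)) * (C2 * (M ^ (-s) * ((i : ℝ) + 1) ^ (p * s)))
          = (C * C1 * C2 * M ^ (-s)) *
              (((i : ℝ) + 1) ^ (-α) * ((i : ℝ) + 1) ^ (p * s)) := by ring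
        _ = (C * C1 * C2 * M ^ (-s)) * ((i : ℝ) + 1) ^ (-q) := by rw [hexp]
    exact hsqrt.trans hfin
  -- assemble
  have hgsum : Summable (fun i : ℕ =>
      (C * C1 * C2 * M ^ (-s)) * ((i : ℝ) + 1) ^ (-q)) := hQsum.mul_left _
  have hbsum : Summable (fun i : ℕ =>
      Real.sqrt (∑' j : {j : ℕ // m i ≤ j}, (c i (j : ℕ)) ^ 2)) :=
    Summable.of_nonneg_of_le (fun i => Real.sqrt_nonneg _) hkey hgsum
  refine ⟨m, hmmono, hmsum, hbsum, ?_⟩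
  have h1 : ∑' i : ℕ, Real.sqrt (∑' j : {j : ℕ // m i ≤ j}, (c i (j : ℕ)) ^ 2) ≤
      ∑' i : ℕ, (C * C1 * C2 * M ^ (-s)) * ((i : ℝ) + 1) ^ (-q) :=
    Summable.tsum_le_tsum hkey hbsum hgsum
  have h2 : ∑' i : ℕ, (C * C1 * C2 * M ^ (-s)) * ((i : ℝ) + 1) ^ (-q) =
      C * C1 * C2 * M ^ (-s) * Zq := tsum_mul_left
  have hMs : M ^ (-s) = Z ^ s * (N : ℝ) ^ (-s) := by
    rw [hMdef, Real.div_rpow hNpos.le hZpos.le, Real.rpow_neg hZpos.le,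
      div_eq_mul_inv, inv_inv, mul_comm]
  have h3 : (N : ℝ) ^ (-s) ≤ (N : ℝ) ^ (-(min (α - 1) β) + δ) := by
    apply Real.rpow_le_rpow_of_exponent_le hN1
    have : -s = -γ + δ' := by rw [hsdef]; ring
    rw [this, ← hγdef]
    linarith
  calc ∑' i : ℕ, Real.sqrt (∑' j : {j : ℕ // m i ≤ j}, (c i (j : ℕ)) ^ 2)
      ≤ C * C1 * C2 * M ^ (-s) * Zq := h1.trans_eq h2
    _ = (C * C1 * C2 * Zq * Z ^ s) * (N : ℝ) ^ (-s) := by rw [hMs]; ring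
    _ ≤ (C * C1 * C2 * Zq * Z ^ s) * (N : ℝ) ^ (-(min (α - 1) β) + δ) := by
        apply mul_le_mul_of_nonneg_left h3 (by positivity)
end

section
/- Let $\alpha > 1/2$, $\beta > 0$, and let $(a_i)_{i\ge 1}, (d_j)_{j\ge 1}$ be positive sequences with $a_i \le C_1 i^{-\alpha}$, $d_j \le C_2 j^{-\beta}$, and $(d_j)$ monotonically decreasing. Suppose $(c_{i,j})$ satisfies $\sum_{j} c_{i,j}^2 d_j^{-2} \le C^2 a_i^2$ for every $i$. Then for every $\delta > 0$ there exists $K$ such that for every $N\in\mathbb{N}$ there exists a monotonically decreasing $(m_i)_{i\in\mathbb{N}}\subseteq\mathbb{N}_0$ with $\sum_i m_i \le N$ and $\big(\sum_{i\in\mathbb{N}} \sum_{j > m_i} c_{i,j}^2\big)^{1/2} \le K\, N^{-\min\{\alpha - 1/2,\, \beta\} + \delta}$. -/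
private lemma auxsum7 {t : ℝ} (ht : t < -1) :
    Summable fun n : ℕ => ((n : ℝ) + 1) ^ t := by
  have h : Summable fun n : ℕ => ((n : ℝ)) ^ t := Real.summable_nat_rpow.mpr ht
  have h2 := (summable_nat_add_iff (f := fun n : ℕ => (n : ℝ) ^ t) 1).mpr h
  refine h2.congr fun n => ?_
  push_cast
  ring_nf

private lemma sq_rpow7 {x p : ℝ} (hx : 0 ≤ x) : (x ^ p) ^ 2 = x ^ (2 * p) := by
  rw [← Real.rpow_natCast (x ^ p) 2, ← Real.rpow_mul hx]
  norm_num
  ring_nf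

private lemma stmt7_core (α β C1 C2 C : ℝ) (hβ : 0 < β) (hβα : β < α - 1 / 2)
    (hC1 : 0 < C1) (hC2 : 0 < C2) (hC : 0 < C)
    (a d : ℕ → ℝ) (hapos : ∀ i, 0 < a i) (hdpos : ∀ j, 0 < d j)
    (ha : ∀ i : ℕ, a i ≤ C1 * ((i : ℝ) + 1) ^ (-α))
    (hd : ∀ j : ℕ, d j ≤ C2 * ((j : ℝ) + 1) ^ (-β))
    (hdmono : ∀ j, d (j + 1) ≤ d j)
    (c : ℕ → ℕ → ℝ)
    (hcsum : ∀ i, Summable fun j => (c i j) ^ 2 / (d j) ^ 2)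
    (hcb : ∀ i, ∑' j, (c i j) ^ 2 / (d j) ^ 2 ≤ C ^ 2 * (a i) ^ 2) :
    ∃ K > (0 : ℝ), ∀ N : ℕ, 1 ≤ N → ∃ m : ℕ → ℕ,
      (∀ i, m (i + 1) ≤ m i) ∧
      (∀ F : Finset ℕ, ∑ i ∈ F, m i ≤ N) ∧
      (Summable fun i => ∑' j : {j : ℕ // m i ≤ j}, (c i (j : ℕ)) ^ 2) ∧
      Real.sqrt (∑' i, ∑' j : {j : ℕ // m i ≤ j}, (c i (j : ℕ)) ^ 2) ≤
        K * (N : ℝ) ^ (-β) := by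
  have hα : 1 / 2 < α := by linarith
  have hdanti : Antitone d := antitone_nat_of_succ_le hdmono
  set t : ℝ := (1 + (α - 1 / 2) / β) / 2 with htdef
  have hR : 1 < (α - 1 / 2) / β := (one_lt_div hβ).mpr (by linarith)
  have ht1 : 1 < t := by rw [htdef]; linarith
  have ht2 : t < (α - 1 / 2) / β := by rw [htdef]; linarith
  have htpos : 0 < t := by linarith
  have hβt : β * t < α - 1 / 2 := by
    have h1 : β * t < β * ((α - 1 / 2) / β) := by
      exact (mul_lt_mul_iff_right₀ hβ).mpr ht2
    have h2 : β * ((α - 1 / 2) / β) = α - 1 / 2 := by field_simp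
    linarith
  have he : 2 * β * t - 2 * α < -1 := by linarith
  have hSsum : Summable fun i : ℕ => ((i : ℝ) + 1) ^ (-t) := auxsum7 (by linarith)
  set S : ℝ := ∑' i : ℕ, ((i : ℝ) + 1) ^ (-t) with hSdef
  have hS1 : 1 ≤ S := by
    have h := Summable.le_tsum hSsum 0 (fun j _ => Real.rpow_nonneg (by positivity) _)
    simpa using h
  have hS0 : 0 < S := lt_of_lt_of_le one_pos hS1
  have hTsum : Summable fun i : ℕ => ((i : ℝ) + 1) ^ (2 * β * t - 2 * α) := auxsum7 he
  set T : ℝ := ∑' i : ℕ, ((i : ℝ) + 1) ^ (2 * β * t - 2 * α) with hTdef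
  have hT1 : 1 ≤ T := by
    have h := Summable.le_tsum hTsum 0 (fun j _ => Real.rpow_nonneg (by positivity) _)
    simpa using h
  have hT0 : 0 < T := lt_of_lt_of_le one_pos hT1
  refine ⟨Real.sqrt (C ^ 2 * C1 ^ 2 * C2 ^ 2 * S ^ (2 * β) * T),
    Real.sqrt_pos.mpr (by positivity), ?_⟩
  intro N hN
  have hN0 : (0 : ℝ) < (N : ℝ) := by exact_mod_cast Nat.lt_of_lt_of_le Nat.zero_lt_one hN
  set m : ℕ → ℕ := fun i => ⌊(N : ℝ) / (S * ((i : ℝ) + 1) ^ t)⌋₊ with hmdef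
  -- monotonicity
  have hmono : ∀ i, m (i + 1) ≤ m i := by
    intro i
    apply Nat.floor_mono
    have h12 : ((i : ℝ) + 1) ^ t ≤ (((i + 1 : ℕ) : ℝ) + 1) ^ t :=
      Real.rpow_le_rpow (by positivity) (by push_cast; linarith) htpos.le
    gcongr
  -- sum bound
  have hmle : ∀ F : Finset ℕ, ∑ i ∈ F, m i ≤ N := by
    intro F
    have h1 : ((∑ i ∈ F, m i : ℕ) : ℝ) ≤ (N : ℝ) := by
      push_cast
      calc ∑ i ∈ F, (m i : ℝ)
          ≤ ∑ i ∈ F, (N : ℝ) / S * ((i : ℝ) + 1) ^ (-t) := by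
            apply Finset.sum_le_sum
            intro i _
            have hfl : (m i : ℝ) ≤ (N : ℝ) / (S * ((i : ℝ) + 1) ^ t) :=
              Nat.floor_le (by positivity)
            refine hfl.trans_eq ?_
            rw [Real.rpow_neg (by positivity), ← div_div, div_eq_mul_inv ((N : ℝ) / S)]
        _ ≤ (N : ℝ) / S * S := by
            rw [← Finset.mul_sum]
            refine mul_le_mul_of_nonneg_left ?_ (by positivity)
            exact Summable.sum_le_tsum F (fun i _ => by positivity) hSsum
        _ = (N : ℝ) := div_mul_cancel₀ _ hS0.ne'
    exact_mod_cast h1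
  -- tail bound for each i
  have htail : ∀ i, Summable (fun j : {j : ℕ // m i ≤ j} => (c i (j : ℕ)) ^ 2) ∧
      ∑' j : {j : ℕ // m i ≤ j}, (c i (j : ℕ)) ^ 2 ≤ d (m i) ^ 2 * (C ^ 2 * (a i) ^ 2) := by
    intro i
    have hb : ∀ j : {j : ℕ // m i ≤ j},
        (c i (j : ℕ)) ^ 2 ≤ ((c i (j : ℕ)) ^ 2 / (d (j : ℕ)) ^ 2) * d (m i) ^ 2 := by
      rintro ⟨j, hj⟩
      have hdj := hdpos j
      have h1 : d j ≤ d (m i) := hdanti hj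
      have h2 : d j ^ 2 ≤ d (m i) ^ 2 := by nlinarith [hdpos (m i)]
      calc (c i j) ^ 2 = ((c i j) ^ 2 / (d j) ^ 2) * (d j) ^ 2 := by field_simp
        _ ≤ ((c i j) ^ 2 / (d j) ^ 2) * d (m i) ^ 2 :=
            mul_le_mul_of_nonneg_left h2 (by positivity)
    have hs2 : Summable fun j : {j : ℕ // m i ≤ j} =>
        ((c i (j : ℕ)) ^ 2 / (d (j : ℕ)) ^ 2) * d (m i) ^ 2 :=
      (((hcsum i).subtype {j | m i ≤ j}).mul_right _)
    have hs1 : Summable fun j : {j : ℕ // m i ≤ j} => (c i (j : ℕ)) ^ 2 :=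
      Summable.of_nonneg_of_le (fun j => sq_nonneg _) hb hs2
    refine ⟨hs1, ?_⟩
    calc ∑' j : {j : ℕ // m i ≤ j}, (c i (j : ℕ)) ^ 2
        ≤ ∑' j : {j : ℕ // m i ≤ j}, ((c i (j : ℕ)) ^ 2 / (d (j : ℕ)) ^ 2) * d (m i) ^ 2 :=
          Summable.tsum_le_tsum hb hs1 hs2
      _ = (∑' j : {j : ℕ // m i ≤ j}, (c i (j : ℕ)) ^ 2 / (d (j : ℕ)) ^ 2) * d (m i) ^ 2 :=
          tsum_mul_right
      _ ≤ (∑' j : ℕ, (c i j) ^ 2 / (d j) ^ 2) * d (m i) ^ 2 := by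
          refine mul_le_mul_of_nonneg_right ?_ (sq_nonneg _)
          exact Summable.tsum_subtype_le (fun j => (c i j) ^ 2 / (d j) ^ 2) {j | m i ≤ j}
            (fun j => by positivity) (hcsum i)
      _ ≤ (C ^ 2 * (a i) ^ 2) * d (m i) ^ 2 :=
          mul_le_mul_of_nonneg_right (hcb i) (sq_nonneg _)
      _ = d (m i) ^ 2 * (C ^ 2 * (a i) ^ 2) := by ring
  -- numeric bound on d (m i)^2 * (C^2 * a i^2)
  have hbd : ∀ i : ℕ, d (m i) ^ 2 * (C ^ 2 * (a i) ^ 2) ≤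
      C ^ 2 * C1 ^ 2 * C2 ^ 2 * S ^ (2 * β) * (N : ℝ) ^ (-(2 * β)) *
        ((i : ℝ) + 1) ^ (2 * β * t - 2 * α) := by
    intro i
    set x : ℝ := (m i : ℝ) + 1 with hxdef
    have hx0 : (0 : ℝ) < x := by positivity
    set y : ℝ := (N : ℝ) / (S * ((i : ℝ) + 1) ^ t) with hydef
    have hy0 : (0 : ℝ) < y := by positivity
    have hyx : y ≤ x := (Nat.lt_floor_add_one y).le
    have h1 : d (m i) ^ 2 ≤ C2 ^ 2 * x ^ (-(2 * β)) := by
      have hdm : d (m i) ≤ C2 * x ^ (-β) := hd (m i)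
      have hsq : (d (m i)) ^ 2 ≤ (C2 * x ^ (-β)) ^ 2 :=
        pow_le_pow_left₀ (hdpos _).le hdm 2
      calc d (m i) ^ 2 ≤ (C2 * x ^ (-β)) ^ 2 := hsq
        _ = C2 ^ 2 * (x ^ (-β)) ^ 2 := by ring
        _ = C2 ^ 2 * x ^ (-(2 * β)) := by
            rw [sq_rpow7 hx0.le, show (2:ℝ) * (-β) = -(2 * β) from by ring]
    have h2 : (a i) ^ 2 ≤ C1 ^ 2 * ((i : ℝ) + 1) ^ (-(2 * α)) := by
      have hai := ha i
      have hp : (0 : ℝ) < ((i : ℝ) + 1) := by positivity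
      have hsq : (a i) ^ 2 ≤ (C1 * ((i : ℝ) + 1) ^ (-α)) ^ 2 :=
        pow_le_pow_left₀ (hapos i).le hai 2
      calc (a i) ^ 2 ≤ (C1 * ((i : ℝ) + 1) ^ (-α)) ^ 2 := hsq
        _ = C1 ^ 2 * (((i : ℝ) + 1) ^ (-α)) ^ 2 := by ring
        _ = C1 ^ 2 * ((i : ℝ) + 1) ^ (-(2 * α)) := by
            rw [sq_rpow7 hp.le, show (2:ℝ) * (-α) = -(2 * α) from by ring]
    have hp : (0 : ℝ) < ((i : ℝ) + 1) := by positivity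
    have h3 : x ^ (-(2 * β)) ≤
        (N : ℝ) ^ (-(2 * β)) * (S ^ (2 * β) * ((i : ℝ) + 1) ^ (2 * β * t)) := by
      have step1 : x ^ (-(2 * β)) ≤ y ^ (-(2 * β)) :=
        Real.rpow_le_rpow_of_nonpos hy0 hyx (by linarith)
      have hz : (0 : ℝ) < S * ((i : ℝ) + 1) ^ t := by positivity
      have e2 : (S * ((i : ℝ) + 1) ^ t) ^ (2 * β) =
          S ^ (2 * β) * ((i : ℝ) + 1) ^ (2 * β * t) := by
        rw [Real.mul_rpow hS0.le (by positivity), ← Real.rpow_mul hp.le,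
          show t * (2 * β) = 2 * β * t from by ring]
      have step2 : y ^ (-(2 * β)) =
          (N : ℝ) ^ (-(2 * β)) * (S ^ (2 * β) * ((i : ℝ) + 1) ^ (2 * β * t)) := by
        rw [hydef, div_eq_mul_inv, Real.mul_rpow hN0.le (inv_nonneg.mpr hz.le),
          Real.inv_rpow hz.le, ← Real.rpow_neg hz.le, neg_neg, e2]
      linarith [step1, step2.le]
    have hmm : d (m i) ^ 2 * (a i) ^ 2 ≤
        (C2 ^ 2 * x ^ (-(2 * β))) * (C1 ^ 2 * ((i : ℝ) + 1) ^ (-(2 * α))) :=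
      mul_le_mul h1 h2 (sq_nonneg _) (by positivity)
    calc d (m i) ^ 2 * (C ^ 2 * (a i) ^ 2)
        = C ^ 2 * (d (m i) ^ 2 * (a i) ^ 2) := by ring
      _ ≤ C ^ 2 * ((C2 ^ 2 * x ^ (-(2 * β))) * (C1 ^ 2 * ((i : ℝ) + 1) ^ (-(2 * α)))) :=
          mul_le_mul_of_nonneg_left hmm (by positivity)
      _ = (C ^ 2 * C1 ^ 2 * C2 ^ 2 * ((i : ℝ) + 1) ^ (-(2 * α))) * x ^ (-(2 * β)) := by ring
      _ ≤ (C ^ 2 * C1 ^ 2 * C2 ^ 2 * ((i : ℝ) + 1) ^ (-(2 * α))) *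
            ((N : ℝ) ^ (-(2 * β)) * (S ^ (2 * β) * ((i : ℝ) + 1) ^ (2 * β * t))) :=
          mul_le_mul_of_nonneg_left h3 (by positivity)
      _ = C ^ 2 * C1 ^ 2 * C2 ^ 2 * S ^ (2 * β) * (N : ℝ) ^ (-(2 * β)) *
            (((i : ℝ) + 1) ^ (2 * β * t) * ((i : ℝ) + 1) ^ (-(2 * α))) := by ring
      _ = C ^ 2 * C1 ^ 2 * C2 ^ 2 * S ^ (2 * β) * (N : ℝ) ^ (-(2 * β)) *
            ((i : ℝ) + 1) ^ (2 * β * t - 2 * α) := by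
          rw [← Real.rpow_add hp, show 2 * β * t + -(2 * α) = 2 * β * t - 2 * α from by ring]
  -- assemble
  have htail_nonneg : ∀ i, 0 ≤ ∑' j : {j : ℕ // m i ≤ j}, (c i (j : ℕ)) ^ 2 :=
    fun i => tsum_nonneg fun j => sq_nonneg _
  have hstep : ∀ i, ∑' j : {j : ℕ // m i ≤ j}, (c i (j : ℕ)) ^ 2 ≤
      C ^ 2 * C1 ^ 2 * C2 ^ 2 * S ^ (2 * β) * (N : ℝ) ^ (-(2 * β)) *
        ((i : ℝ) + 1) ^ (2 * β * t - 2 * α) :=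
    fun i => (htail i).2.trans (hbd i)
  have hbsum : Summable fun i : ℕ =>
      C ^ 2 * C1 ^ 2 * C2 ^ 2 * S ^ (2 * β) * (N : ℝ) ^ (-(2 * β)) *
        ((i : ℝ) + 1) ^ (2 * β * t - 2 * α) := hTsum.mul_left _
  have hsum : Summable (fun i => ∑' j : {j : ℕ // m i ≤ j}, (c i (j : ℕ)) ^ 2) :=
    Summable.of_nonneg_of_le htail_nonneg hstep hbsum
  refine ⟨m, hmono, hmle, hsum, ?_⟩
  have h4 : ∑' i, ∑' j : {j : ℕ // m i ≤ j}, (c i (j : ℕ)) ^ 2 ≤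
      C ^ 2 * C1 ^ 2 * C2 ^ 2 * S ^ (2 * β) * T * (N : ℝ) ^ (-(2 * β)) := by
    calc ∑' i, ∑' j : {j : ℕ // m i ≤ j}, (c i (j : ℕ)) ^ 2
        ≤ ∑' i : ℕ, C ^ 2 * C1 ^ 2 * C2 ^ 2 * S ^ (2 * β) * (N : ℝ) ^ (-(2 * β)) *
            ((i : ℝ) + 1) ^ (2 * β * t - 2 * α) := Summable.tsum_le_tsum hstep hsum hbsum
      _ = C ^ 2 * C1 ^ 2 * C2 ^ 2 * S ^ (2 * β) * (N : ℝ) ^ (-(2 * β)) * T := tsum_mul_left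
      _ = C ^ 2 * C1 ^ 2 * C2 ^ 2 * S ^ (2 * β) * T * (N : ℝ) ^ (-(2 * β)) := by ring
  have h5 : Real.sqrt (∑' i, ∑' j : {j : ℕ // m i ≤ j}, (c i (j : ℕ)) ^ 2) ≤
      Real.sqrt (C ^ 2 * C1 ^ 2 * C2 ^ 2 * S ^ (2 * β) * T * (N : ℝ) ^ (-(2 * β))) :=
    Real.sqrt_le_sqrt h4
  refine h5.trans_eq ?_
  rw [Real.sqrt_mul (by positivity) ((N : ℝ) ^ (-(2 * β)))]
  congr 1
  have : (N : ℝ) ^ (-(2 * β)) = ((N : ℝ) ^ (-β)) ^ 2 := by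
    rw [sq_rpow7 hN0.le, show (2:ℝ) * (-β) = -(2 * β) from by ring]
  rw [this, Real.sqrt_sq (Real.rpow_nonneg hN0.le _)]

/-- Lemma 4.4 (ii): mean-square version. Indexing is 0-based: index
`i : ℕ` stands for `i + 1`, and the tail `∑_{j > m_i}` (1-based) is the sum over
`{j : ℕ // m i ≤ j}` (0-based). -/
theorem stmt7 (α β C1 C2 C : ℝ) (hα : 1 / 2 < α) (hβ : 0 < β)
    (hC1 : 0 < C1) (hC2 : 0 < C2) (hC : 0 < C)
    (a d : ℕ → ℝ) (hapos : ∀ i, 0 < a i) (hdpos : ∀ j, 0 < d j)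
    (ha : ∀ i : ℕ, a i ≤ C1 * ((i : ℝ) + 1) ^ (-α))
    (hd : ∀ j : ℕ, d j ≤ C2 * ((j : ℝ) + 1) ^ (-β))
    (hdmono : ∀ j, d (j + 1) ≤ d j)
    (c : ℕ → ℕ → ℝ)
    (hcsum : ∀ i, Summable fun j => (c i j) ^ 2 / (d j) ^ 2)
    (hcb : ∀ i, ∑' j, (c i j) ^ 2 / (d j) ^ 2 ≤ C ^ 2 * (a i) ^ 2)
    (δ : ℝ) (hδ : 0 < δ) :
    ∃ K > (0 : ℝ), ∀ N : ℕ, 1 ≤ N → ∃ m : ℕ → ℕ,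
      (∀ i, m (i + 1) ≤ m i) ∧
      (∀ F : Finset ℕ, ∑ i ∈ F, m i ≤ N) ∧
      (Summable fun i => ∑' j : {j : ℕ // m i ≤ j}, (c i (j : ℕ)) ^ 2) ∧
      Real.sqrt (∑' i, ∑' j : {j : ℕ // m i ≤ j}, (c i (j : ℕ)) ^ 2) ≤
        K * (N : ℝ) ^ (-(min (α - 1 / 2) β) + δ) := by
  have hhalf : 0 < α - 1 / 2 := by linarith
  set ε : ℝ := min δ (α - 1 / 2) / 2 with hεdef
  have hε0 : 0 < ε := by
    have h0 : 0 < min δ (α - 1 / 2) := lt_min hδ hhalf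
    rw [hεdef]; linarith
  have hεδ : ε < δ := by
    have h1 : min δ (α - 1 / 2) ≤ δ := min_le_left _ _
    rw [hεdef]; linarith
  have hεh : ε < α - 1 / 2 := by
    have h1 : min δ (α - 1 / 2) ≤ α - 1 / 2 := min_le_right _ _
    rw [hεdef]; linarith
  set β' : ℝ := min β (α - 1 / 2 - ε) with hβ'def
  have hβ'0 : 0 < β' := lt_min hβ (by linarith)
  have hβ'α : β' < α - 1 / 2 := (min_le_right _ _).trans_lt (by linarith)
  have hβ'β : β' ≤ β := min_le_left _ _
  have hd' : ∀ j : ℕ, d j ≤ C2 * ((j : ℝ) + 1) ^ (-β') := by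
    intro j
    refine (hd j).trans (mul_le_mul_of_nonneg_left ?_ hC2.le)
    have h1 : (1 : ℝ) ≤ (j : ℝ) + 1 := by
      have := Nat.cast_nonneg (α := ℝ) j
      linarith
    exact Real.rpow_le_rpow_of_exponent_le h1 (by linarith)
  obtain ⟨K, hK0, hK⟩ := stmt7_core α β' C1 C2 C hβ'0 hβ'α hC1 hC2 hC a d hapos hdpos
    ha hd' hdmono c hcsum hcb
  refine ⟨K, hK0, fun N hN => ?_⟩
  obtain ⟨m, h1, h2, h3, h4⟩ := hK N hN
  refine ⟨m, h1, h2, h3, h4.trans ?_⟩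
  refine mul_le_mul_of_nonneg_left ?_ hK0.le
  have hN1 : (1 : ℝ) ≤ (N : ℝ) := by exact_mod_cast hN
  refine Real.rpow_le_rpow_of_exponent_le hN1 ?_
  have hmA : min (α - 1 / 2) β ≤ α - 1 / 2 := min_le_left _ _
  have hmB : min (α - 1 / 2) β ≤ β := min_le_right _ _
  rcases le_total β (α - 1 / 2 - ε) with h | h
  · have hb : β' = β := min_eq_left h
    linarith
  · have hb : β' = α - 1 / 2 - ε := min_eq_right h
    linarith
end

section
/- Let $\alpha > 1$, $\beta > 0$, and $n \in \mathbb{N}$. Define $m_i := \lceil (n/i)^{(\alpha-1)/\beta} \rceil$ for $i \le n$ and $m_i := 0$ for $i > n$. Then there is a constant $K$ depending only on $\alpha, \beta$ such that $\sum_{i\in\mathbb{N}} m_i \le K \cdot \begin{cases} n^{(\alpha-1)/\beta} & \text{if } (\alpha-1)/\beta > 1 \\ n\log(n+1) & \text{if } (\alpha-1)/\beta = 1 \\ n & \text{if } (\alpha-1)/\beta < 1 \end{cases}$ and moreover $\sum_{i \le n} m_i^{-\beta} i^{-\alpha} + \sum_{i > n} i^{-\alpha} \le K\, n^{-\alpha+1}\log(n+1)$.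 -/
open Finset

lemma myAntitone (p : ℝ) (hp : 0 ≤ p) (a b : ℝ) (ha : 0 < a) :
    AntitoneOn (fun x : ℝ => x ^ (-p)) (Set.Icc a b) := by
  intro x hx y hy hxy
  exact Real.rpow_le_rpow_of_nonpos (lt_of_lt_of_le ha hx.1) hxy (neg_nonpos.mpr hp)

lemma mySumIoc (p : ℝ) (hp : 0 ≤ p) (hp1 : p ≠ 1) (a b : ℕ) (ha : 1 ≤ a) (hab : a ≤ b) :
    ∑ i ∈ Finset.Ioc a b, (i : ℝ) ^ (-p) ≤ ((b:ℝ) ^ (1-p) - (a:ℝ) ^ (1-p)) / (1-p) := by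
  have ha' : (0:ℝ) < a := by exact_mod_cast ha
  have hf := (myAntitone p hp a b ha').sum_le_integral_Ico hab
  have hint : ∫ x in (a:ℝ)..(b:ℝ), x ^ (-p) = ((b:ℝ) ^ (1-p) - (a:ℝ) ^ (1-p)) / (1-p) := by
    rw [integral_rpow]
    · rw [neg_add_eq_sub]
    · right
      constructor
      · intro h; apply hp1; linarith [neg_eq_iff_eq_neg.mp h]
      · rw [Set.uIcc_of_le (by exact_mod_cast hab)]
        intro h
        exact absurd (Set.mem_Icc.mp h).1 (by push_neg; exact ha')
  rw [← hint]
  refine le_trans (le_of_eq ?_) hf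
  rw [← Finset.Ico_add_one_add_one_eq_Ioc, ← Finset.sum_Ico_add' (fun i : ℕ => (i:ℝ) ^ (-p)) a b 1]

lemma myHarmonic (n : ℕ) : ∑ i ∈ Finset.Icc 1 n, (i : ℝ)⁻¹ ≤ 1 + Real.log n := by
  have h := harmonic_le_one_add_log n
  rw [harmonic_eq_sum_Icc] at h
  push_cast at h
  exact h

lemma myTail (p : ℝ) (hp : 1 < p) (n : ℕ) (hn : 1 ≤ n) :
    ∑' i : {i : ℕ // n < i}, ((i : ℕ) : ℝ) ^ (-p) ≤ (n:ℝ) ^ (1-p) / (p-1) := by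
  have hsum : Summable (fun i : ℕ => (i : ℝ) ^ (-p)) :=
    Real.summable_nat_rpow.mpr (by linarith)
  refine Summable.tsum_le_of_sum_le (hsum.subtype _) ?_
  intro s
  set t : Finset ℕ := s.map (Function.Embedding.subtype _) with ht
  have hst : ∑ x ∈ s, ((x : ℕ) : ℝ) ^ (-p) = ∑ i ∈ t, (i : ℝ) ^ (-p) := by
    rw [ht, Finset.sum_map]; rfl
  rw [hst]
  have hsub : t ⊆ Finset.Ioc n (t.sup id ⊔ n) := by
    intro i hi
    rw [ht, Finset.mem_map] at hi
    obtain ⟨⟨j, hj⟩, hjs, rfl⟩ := hi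
    exact Finset.mem_Ioc.mpr ⟨hj, le_sup_of_le_left (Finset.le_sup (f := id) (Finset.mem_map_of_mem _ hjs))⟩
  have h1 : ∑ i ∈ t, (i : ℝ) ^ (-p) ≤ ∑ i ∈ Finset.Ioc n (t.sup id ⊔ n), (i : ℝ) ^ (-p) := by
    refine Finset.sum_le_sum_of_subset_of_nonneg hsub ?_
    intro i _ _; positivity
  refine h1.trans ?_
  have h2 := mySumIoc p (by linarith) (by linarith) n (t.sup id ⊔ n) hn le_sup_right
  refine h2.trans ?_
  have hM : (0:ℝ) ≤ ((t.sup id ⊔ n : ℕ) : ℝ) ^ (1-p) := by positivity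
  have key : (((t.sup id ⊔ n : ℕ):ℝ) ^ (1-p) - (n:ℝ) ^ (1-p)) / (1-p)
      = ((n:ℝ) ^ (1-p) - ((t.sup id ⊔ n : ℕ):ℝ) ^ (1-p)) / (p-1) := by
    rw [← neg_div_neg_eq]; ring_nf
  rw [key, div_le_div_iff_of_pos_right (by linarith)]
  linarith

/-- explicit budget/error computation with `m_i = ⌈(n/i)^{(α-1)/β}⌉` for
`1 ≤ i ≤ n` and `m_i = 0` for `i > n` (1-based indexing, encoded by a function on `ℕ`
vanishing at `0` and above `n`): a budget bound for `∑_i m_i` (with the three cases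
according to `(α-1)/β`) and the error bound
`∑_{i ≤ n} m_i^{-β} i^{-α} + ∑_{i > n} i^{-α} ≤ K n^{-α+1} log(n+1)`,
with `K` depending only on `α, β`. -/
theorem stmt14 (α β : ℝ) (hα : 1 < α) (hβ : 0 < β) :
    ∃ K > (0 : ℝ), ∀ n : ℕ, 1 ≤ n → ∀ m : ℕ → ℕ,
      (∀ i : ℕ, 1 ≤ i → i ≤ n → m i = ⌈((n : ℝ) / (i : ℝ)) ^ ((α - 1) / β)⌉₊) →
      (∀ i : ℕ, n < i → m i = 0) → m 0 = 0 →
      ((∑ i ∈ Finset.Icc 1 n, (m i : ℝ)) ≤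
        K * (if 1 < (α - 1) / β then (n : ℝ) ^ ((α - 1) / β)
             else if (α - 1) / β = 1 then (n : ℝ) * Real.log ((n : ℝ) + 1)
             else (n : ℝ))) ∧
      ((∑ i ∈ Finset.Icc 1 n, ((m i : ℝ)) ^ (-β) * (i : ℝ) ^ (-α)) +
          ∑' i : {i : ℕ // n < i}, ((i : ℝ)) ^ (-α) ≤
        K * (n : ℝ) ^ (-α + 1) * Real.log ((n : ℝ) + 1)) := by
  obtain ⟨γ, hγdef⟩ : ∃ g : ℝ, g = (α - 1) / β := ⟨_, rfl⟩
  have hγpos : 0 < γ := hγdef ▸ div_pos (by linarith) hβ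
  have hlog2 : (0:ℝ) < Real.log 2 := Real.log_pos one_lt_two
  obtain ⟨c, hcdef⟩ : ∃ c : ℝ, c = 1 + 1 / (α - 1) := ⟨_, rfl⟩
  have hc : 0 < c := by
    have : 0 < 1 / (α - 1) := div_pos one_pos (by linarith)
    rw [hcdef]; linarith
  obtain ⟨A, hAdef⟩ : ∃ A : ℝ, A = c / Real.log 2 + 1 := ⟨_, rfl⟩
  have hA : 0 < A := by
    have : 0 < c / Real.log 2 := div_pos hc hlog2
    rw [hAdef]; linarith
  obtain ⟨D, hDdef⟩ : ∃ D : ℝ,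
      D = if 1 < γ then 1 / (γ - 1) else if γ = 1 then 0 else 1 / (1 - γ) := ⟨_, rfl⟩
  have hD0 : 0 ≤ D := by
    rw [hDdef]
    split_ifs with h1 h2
    · exact le_of_lt (div_pos one_pos (by linarith))
    · exact le_refl 0
    · have h3 : γ < 1 := lt_of_le_of_ne (not_lt.mp h1) h2
      exact le_of_lt (div_pos one_pos (by linarith))
  obtain ⟨B, hBdef⟩ : ∃ B : ℝ, B = 2 / Real.log 2 + 2 + D := ⟨_, rfl⟩
  have hlB : 0 < 2 / Real.log 2 := by positivity
  have hB : 0 < B := by rw [hBdef]; linarith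
  refine ⟨A + B, by linarith, ?_⟩
  intro n hn m hm hm' hm0
  rw [← hγdef]
  simp only [← hγdef] at hm
  have hn1 : (1:ℝ) ≤ (n:ℝ) := by exact_mod_cast hn
  have hnpos : (0:ℝ) < (n:ℝ) := by linarith
  obtain ⟨L, hLdef⟩ : ∃ L : ℝ, L = Real.log ((n:ℝ) + 1) := ⟨_, rfl⟩
  rw [← hLdef]
  have hL2 : Real.log 2 ≤ L := hLdef ▸ Real.log_le_log (by norm_num) (by linarith)
  have hL0 : 0 ≤ L := le_trans hlog2.le hL2
  have hLn : Real.log (n:ℝ) ≤ L := hLdef ▸ Real.log_le_log hnpos (by linarith)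
  -- budget core
  have hbud : (∑ i ∈ Finset.Icc 1 n, (m i : ℝ)) ≤
      (n:ℝ) + (n:ℝ) ^ γ * ∑ i ∈ Finset.Icc 1 n, (i:ℝ) ^ (-γ) := by
    have step : ∀ i ∈ Finset.Icc 1 n, (m i : ℝ) ≤ (n:ℝ) ^ γ * (i:ℝ) ^ (-γ) + 1 := by
      intro i hi
      obtain ⟨hi1, hi2⟩ := Finset.mem_Icc.mp hi
      rw [hm i hi1 hi2]
      have hx : (0:ℝ) ≤ ((n:ℝ) / (i:ℝ)) ^ γ := by positivity
      have hceil := (Nat.ceil_lt_add_one hx).le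
      have hrw : ((n:ℝ) / (i:ℝ)) ^ γ = (n:ℝ) ^ γ * (i:ℝ) ^ (-γ) := by
        rw [Real.div_rpow (Nat.cast_nonneg n) (Nat.cast_nonneg i),
          Real.rpow_neg (Nat.cast_nonneg i), div_eq_mul_inv]
      linarith [hceil, hrw.le, hrw.ge]
    calc (∑ i ∈ Finset.Icc 1 n, (m i : ℝ))
        ≤ ∑ i ∈ Finset.Icc 1 n, ((n:ℝ) ^ γ * (i:ℝ) ^ (-γ) + 1) := Finset.sum_le_sum step
      _ = (n:ℝ) ^ γ * (∑ i ∈ Finset.Icc 1 n, (i:ℝ) ^ (-γ)) + (n:ℝ) := by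
          rw [Finset.sum_add_distrib, ← Finset.mul_sum]
          simp [Nat.card_Icc]
      _ = (n:ℝ) + (n:ℝ) ^ γ * ∑ i ∈ Finset.Icc 1 n, (i:ℝ) ^ (-γ) := by ring
  have hKeyIcc : ∀ _ : γ ≠ 1, ∑ i ∈ Finset.Icc 1 n, (i:ℝ) ^ (-γ)
      ≤ 1 + ((n:ℝ) ^ (1-γ) - 1) / (1-γ) := by
    intro hne
    rw [Finset.Icc_eq_cons_Ioc hn, Finset.sum_cons]
    have h1 : ((1:ℕ):ℝ) ^ (-γ) = 1 := by
      rw [Nat.cast_one, Real.one_rpow]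
    have h2 := mySumIoc γ hγpos.le hne 1 n le_rfl hn
    rw [h1]
    simp only [Nat.cast_one, Real.one_rpow] at h2
    linarith
  constructor
  · -- budget bound
    by_cases hc1 : 1 < γ
    · rw [if_pos hc1]
      have hKB : 2 + 1 / (γ - 1) ≤ A + B := by
        have hd : D = 1 / (γ - 1) := by rw [hDdef, if_pos hc1]
        rw [hBdef, hd]; linarith
      have hpow : (0:ℝ) ≤ ((n:ℝ):ℝ) ^ (1-γ) := by positivity
      have hsum2 : ∑ i ∈ Finset.Icc 1 n, (i:ℝ) ^ (-γ) ≤ 1 + 1 / (γ - 1) := by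
        refine (hKeyIcc (by linarith)).trans ?_
        have key : ((n:ℝ) ^ (1-γ) - 1) / (1-γ) = (1 - (n:ℝ) ^ (1-γ)) / (γ-1) := by
          rw [← neg_div_neg_eq]; ring_nf
        rw [key]
        have h5 : (1 - (n:ℝ) ^ (1-γ)) / (γ-1) ≤ 1 / (γ-1) := by
          gcongr
          · linarith
        linarith
      have hnγ : (n:ℝ) ≤ (n:ℝ) ^ γ := by
        have := Real.rpow_le_rpow_of_exponent_le hn1 hc1.le
        rwa [Real.rpow_one] at this
      have hγ0 : (0:ℝ) ≤ (n:ℝ) ^ γ := by positivity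
      linarith [mul_le_mul_of_nonneg_left hsum2 hγ0,
        mul_le_mul_of_nonneg_right hKB hγ0]
    · by_cases hc2 : γ = 1
      · rw [if_neg hc1, if_pos hc2]
        have hKB : 2 / Real.log 2 + 1 ≤ A + B := by
          rw [hBdef]; linarith
        have hsum2 : ∑ i ∈ Finset.Icc 1 n, (i:ℝ) ^ (-γ) ≤ 1 + Real.log n := by
          refine le_trans (le_of_eq ?_) (myHarmonic n)
          apply Finset.sum_congr rfl
          intro i _
          rw [hc2, Real.rpow_neg_one]
        have hnγ : (n:ℝ) ^ γ = (n:ℝ) := by rw [hc2, Real.rpow_one]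
        have h22 : (2:ℝ) ≤ (2 / Real.log 2) * L := by
          have := mul_le_mul_of_nonneg_left hL2 hlB.le
          rwa [div_mul_cancel₀ 2 (ne_of_gt hlog2)] at this
        have h3 : 2 + Real.log n ≤ (A + B) * L := by
          have hKL := mul_le_mul_of_nonneg_right hKB hL0
          have hiden : (2 / Real.log 2 + 1) * L = (2 / Real.log 2) * L + L := by ring
          rw [hiden] at hKL
          linarith
        rw [hnγ] at hbud
        have h4 := mul_le_mul_of_nonneg_left h3 (le_of_lt hnpos)
        have hsum3 := mul_le_mul_of_nonneg_left hsum2 (le_of_lt hnpos)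
        calc (∑ i ∈ Finset.Icc 1 n, (m i : ℝ))
            ≤ (n:ℝ) + (n:ℝ) * ∑ i ∈ Finset.Icc 1 n, (i:ℝ) ^ (-γ) := hbud
          _ ≤ (n:ℝ) * (2 + Real.log n) := by linarith
          _ ≤ (n:ℝ) * ((A + B) * L) := h4
          _ = (A + B) * ((n:ℝ) * L) := by ring
      · rw [if_neg hc1, if_neg hc2]
        have hlt : γ < 1 := lt_of_le_of_ne (not_lt.mp hc1) hc2
        have hKB : 2 + 1 / (1 - γ) ≤ A + B := by
          have hd : D = 1 / (1 - γ) := by rw [hDdef, if_neg hc1, if_neg hc2]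
          rw [hBdef, hd]; linarith
        have hsum2 : ∑ i ∈ Finset.Icc 1 n, (i:ℝ) ^ (-γ) ≤ 1 + (n:ℝ) ^ (1-γ) / (1-γ) := by
          refine (hKeyIcc hc2).trans ?_
          have h5 : ((n:ℝ) ^ (1-γ) - 1) / (1-γ) ≤ (n:ℝ) ^ (1-γ) / (1-γ) := by
            gcongr
            · linarith
          linarith
        have hγ0 : (0:ℝ) < (n:ℝ) ^ γ := by positivity
        have hnγ : (n:ℝ) ^ γ ≤ (n:ℝ) := by
          have := Real.rpow_le_rpow_of_exponent_le hn1 hlt.le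
          rwa [Real.rpow_one] at this
        have hmulpow : (n:ℝ) ^ γ * (n:ℝ) ^ (1-γ) = (n:ℝ) := by
          rw [← Real.rpow_add hnpos]
          norm_num
        have hstep := mul_le_mul_of_nonneg_left hsum2 hγ0.le
        have hexp : (n:ℝ) ^ γ * (1 + (n:ℝ) ^ (1-γ) / (1-γ))
            = (n:ℝ) ^ γ + ((n:ℝ) ^ γ * (n:ℝ) ^ (1-γ)) * (1 / (1-γ)) := by ring
        rw [hexp, hmulpow] at hstep
        have hKn := mul_le_mul_of_nonneg_right hKB hnpos.le
        have hiden : (2 + 1 / (1-γ)) * (n:ℝ) = (n:ℝ) + (n:ℝ) + (n:ℝ) * (1 / (1-γ)) := by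
          ring
        rw [hiden] at hKn
        linarith
  · -- error bound
    have hterm : ∀ i ∈ Finset.Icc 1 n,
        ((m i : ℝ)) ^ (-β) * (i:ℝ) ^ (-α) ≤ (n:ℝ) ^ (1-α) * (i:ℝ)⁻¹ := by
      intro i hi
      obtain ⟨hi1, hi2⟩ := Finset.mem_Icc.mp hi
      have hipos : (0:ℝ) < (i:ℝ) := by exact_mod_cast hi1
      rw [hm i hi1 hi2]
      have hx : (0:ℝ) < ((n:ℝ) / (i:ℝ)) ^ γ := by positivity
      have h1 : ((⌈((n:ℝ) / (i:ℝ)) ^ γ⌉₊ : ℕ) : ℝ) ^ (-β) ≤ (((n:ℝ) / (i:ℝ)) ^ γ) ^ (-β) :=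
        Real.rpow_le_rpow_of_nonpos hx (Nat.le_ceil _) (neg_nonpos.mpr hβ.le)
      have h2 : (((n:ℝ) / (i:ℝ)) ^ γ) ^ (-β) = ((n:ℝ) / (i:ℝ)) ^ (1-α) := by
        rw [← Real.rpow_mul (by positivity)]
        congr 1
        rw [hγdef]
        field_simp
        ring
      have h3 : ((n:ℝ) / (i:ℝ)) ^ (1-α) * (i:ℝ) ^ (-α) = (n:ℝ) ^ (1-α) * (i:ℝ)⁻¹ := by
        rw [Real.div_rpow (Nat.cast_nonneg n) (Nat.cast_nonneg i)]
        rw [div_mul_eq_mul_div, mul_div_assoc, ← Real.rpow_sub hipos]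
        have he : -α - (1-α) = (-1 : ℝ) := by ring
        rw [he, Real.rpow_neg_one]
      calc ((⌈((n:ℝ) / (i:ℝ)) ^ γ⌉₊ : ℕ) : ℝ) ^ (-β) * (i:ℝ) ^ (-α)
          ≤ (((n:ℝ) / (i:ℝ)) ^ γ) ^ (-β) * (i:ℝ) ^ (-α) := by
            apply mul_le_mul_of_nonneg_right h1 (by positivity)
        _ = (n:ℝ) ^ (1-α) * (i:ℝ)⁻¹ := by rw [h2, h3]
    have hS : (∑ i ∈ Finset.Icc 1 n, ((m i : ℝ)) ^ (-β) * (i:ℝ) ^ (-α))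
        ≤ (n:ℝ) ^ (1-α) * (1 + Real.log n) := by
      calc (∑ i ∈ Finset.Icc 1 n, ((m i : ℝ)) ^ (-β) * (i:ℝ) ^ (-α))
          ≤ ∑ i ∈ Finset.Icc 1 n, (n:ℝ) ^ (1-α) * (i:ℝ)⁻¹ := Finset.sum_le_sum hterm
        _ = (n:ℝ) ^ (1-α) * ∑ i ∈ Finset.Icc 1 n, (i:ℝ)⁻¹ := by rw [Finset.mul_sum]
        _ ≤ (n:ℝ) ^ (1-α) * (1 + Real.log n) :=
            mul_le_mul_of_nonneg_left (myHarmonic n) (by positivity)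
    have hT : (∑' i : {i : ℕ // n < i}, ((i : ℝ)) ^ (-α)) ≤ (n:ℝ) ^ (1-α) / (α-1) :=
      myTail α hα n hn
    have hexp : (-α + 1 : ℝ) = 1 - α := by ring
    rw [hexp]
    have hApos : (0:ℝ) < c / Real.log 2 := div_pos hc hlog2
    have hcL : c ≤ (c / Real.log 2) * L := by
      have := mul_le_mul_of_nonneg_left hL2 hApos.le
      rwa [div_mul_cancel₀ c (ne_of_gt hlog2)] at this
    have h4 : (1 + Real.log n) + 1 / (α - 1) ≤ (A + B) * L := by
      have hKL := mul_le_mul_of_nonneg_right (show A ≤ A + B by linarith) hL0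
      have hAL : A * L = (c / Real.log 2) * L + L := by rw [hAdef]; ring
      rw [hAL] at hKL
      have hcc : (1:ℝ) + 1 / (α - 1) = c := hcdef.symm
      linarith
    have hpownn : (0:ℝ) ≤ (n:ℝ) ^ (1-α) := by positivity
    calc (∑ i ∈ Finset.Icc 1 n, ((m i : ℝ)) ^ (-β) * (i:ℝ) ^ (-α)) +
          ∑' i : {i : ℕ // n < i}, ((i : ℝ)) ^ (-α)
        ≤ (n:ℝ) ^ (1-α) * (1 + Real.log n) + (n:ℝ) ^ (1-α) / (α-1) := add_le_add hS hT
      _ = (n:ℝ) ^ (1-α) * ((1 + Real.log n) + 1 / (α-1)) := by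
          ring
      _ ≤ (n:ℝ) ^ (1-α) * ((A + B) * L) := mul_le_mul_of_nonneg_left h4 hpownn
      _ = (A + B) * (n:ℝ) ^ (1-α) * L := by ring
end
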